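/- Let ω : [0, ∞) → ℝ be nonnegative, nondecreasing, concave and differentiable with ω'(ε) > 0 for ε in the relevant range, and σ > 0. Let ε_MSE > 0 solve ε²/(ε² + σ²) = ω'(ε)·ε/ω(ε), and let ε* solve max_{ε ∈ [0, a*σ]} ω(ε)·Φ(−ε/σ). Then ε* < ε_MSE. -/

import Mathlib

open Real MeasureTheory Set Filter

/-- The density of the standard normal distribution. -/
noncomputable def stdGaussianPDF (x : ℝ) : ℝ :=
  (Real.sqrt (2 * Real.pi))⁻¹ * Real.exp (-(x ^ 2) / 2)

/-- The cumulative distribution function of the standard normal distribution. -/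
noncomputable def stdGaussianCDF (x : ℝ) : ℝ :=
  ∫ t in Set.Iic x, stdGaussianPDF t

lemma stdGaussianPDF_pos (x : ℝ) : 0 < stdGaussianPDF x := by
  have h2π : (0:ℝ) < 2 * Real.pi := by positivity
  unfold stdGaussianPDF
  positivity

lemma stdGaussianPDF_even (x : ℝ) : stdGaussianPDF (-x) = stdGaussianPDF x := by
  simp [stdGaussianPDF, neg_sq]

lemma stdGaussianPDF_cont : Continuous stdGaussianPDF := by
  unfold stdGaussianPDF
  fun_prop

lemma stdGaussianPDF_integrable : Integrable stdGaussianPDF := by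
  have h : Integrable (fun x : ℝ => Real.exp (-(1/2 : ℝ) * x ^ 2)) :=
    integrable_exp_neg_mul_sq (by norm_num)
  have h2 := h.const_mul (Real.sqrt (2 * Real.pi))⁻¹
  have heq : (fun x : ℝ => (Real.sqrt (2 * Real.pi))⁻¹ * Real.exp (-(1/2 : ℝ) * x ^ 2))
      = stdGaussianPDF := by
    funext x
    unfold stdGaussianPDF
    rw [show -(1/2 : ℝ) * x ^ 2 = -(x ^ 2) / 2 by ring]
  rwa [heq] at h2

lemma mul_stdGaussianPDF_integrable : Integrable (fun x => x * stdGaussianPDF x) := by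
  have h : Integrable (fun x : ℝ => x * Real.exp (-(1/2 : ℝ) * x ^ 2)) :=
    integrable_mul_exp_neg_mul_sq (by norm_num)
  have h2 := h.const_mul (Real.sqrt (2 * Real.pi))⁻¹
  have heq : (fun x : ℝ => (Real.sqrt (2 * Real.pi))⁻¹ * (x * Real.exp (-(1/2 : ℝ) * x ^ 2)))
      = (fun x => x * stdGaussianPDF x) := by
    funext x
    unfold stdGaussianPDF
    rw [show -(1/2 : ℝ) * x ^ 2 = -(x ^ 2) / 2 by ring]
    ring
  rwa [heq] at h2

lemma stdGaussianCDF_hasDerivAt (x : ℝ) :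
    HasDerivAt stdGaussianCDF (stdGaussianPDF x) x := by
  have h1 : ∀ y : ℝ, stdGaussianCDF y
      = stdGaussianCDF 0 + ∫ t in (0:ℝ)..y, stdGaussianPDF t := by
    intro y
    rw [← intervalIntegral.integral_Iic_sub_Iic stdGaussianPDF_integrable.integrableOn
      stdGaussianPDF_integrable.integrableOn]
    simp only [stdGaussianCDF]
    ring
  have h2 := (stdGaussianPDF_cont.integral_hasStrictDerivAt 0 x).hasDerivAt
  have h3 := h2.const_add (stdGaussianCDF 0)
  have heq : stdGaussianCDF
      = fun y => stdGaussianCDF 0 + ∫ t in (0:ℝ)..y, stdGaussianPDF t := funext h1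
  rw [heq]
  exact h3

lemma integral_stdGaussianPDF : ∫ x, stdGaussianPDF x = 1 := by
  have h := integral_gaussian (1/2 : ℝ)
  calc ∫ x, stdGaussianPDF x
      = ∫ x : ℝ, (Real.sqrt (2 * Real.pi))⁻¹ * Real.exp (-(1/2 : ℝ) * x ^ 2) := by
        congr 1
        funext x
        unfold stdGaussianPDF
        rw [show -(1/2 : ℝ) * x ^ 2 = -(x ^ 2) / 2 by ring]
    _ = (Real.sqrt (2 * Real.pi))⁻¹ * ∫ x : ℝ, Real.exp (-(1/2 : ℝ) * x ^ 2) :=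
        integral_const_mul _ _
    _ = 1 := by
        rw [h, show Real.pi / (1/2 : ℝ) = 2 * Real.pi by ring]
        exact inv_mul_cancel₀ (Real.sqrt_ne_zero'.2 (by positivity))

lemma stdGaussianCDF_zero : stdGaussianCDF 0 = 1/2 := by
  have hInt := stdGaussianPDF_integrable
  have h1 : stdGaussianCDF 0 = ∫ t in Set.Ioi (0:ℝ), stdGaussianPDF t := by
    have h := integral_comp_neg_Iic (0:ℝ) stdGaussianPDF
    simp_rw [stdGaussianPDF_even, neg_zero] at h
    exact h
  have h2 : stdGaussianCDF 0 + ∫ t in Set.Ioi (0:ℝ), stdGaussianPDF t = 1 := by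
    rw [← integral_stdGaussianPDF]
    simp only [stdGaussianCDF]
    rw [← setIntegral_union (Set.Iic_disjoint_Ioi le_rfl) measurableSet_Ioi
      hInt.integrableOn hInt.integrableOn, Set.Iic_union_Ioi, setIntegral_univ]
  linarith

lemma stdGaussianCDF_neg_le_half {x : ℝ} (hx : 0 ≤ x) : stdGaussianCDF (-x) ≤ 1/2 := by
  rw [← stdGaussianCDF_zero]
  simp only [stdGaussianCDF]
  apply setIntegral_mono_set stdGaussianPDF_integrable.integrableOn
    (Filter.Eventually.of_forall fun t => (stdGaussianPDF_pos t).le)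
  exact HasSubset.Subset.eventuallyLE (Set.Iic_subset_Iic.2 (by linarith))

lemma stdGaussianPDF_hasDerivAt (t : ℝ) :
    HasDerivAt (fun t => -stdGaussianPDF t) (t * stdGaussianPDF t) t := by
  have h1 : HasDerivAt (fun t : ℝ => -(t ^ 2) / 2) (-t) t := by
    have : HasDerivAt (fun t : ℝ => -(t ^ 2) / 2) _ t := ((hasDerivAt_pow 2 t).neg.div_const 2)
    convert this using 1
    ring
  have h2 : HasDerivAt (fun t => -stdGaussianPDF t) _ t := (h1.exp.const_mul (Real.sqrt (2 * Real.pi))⁻¹).neg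
  convert h2 using 1
  unfold stdGaussianPDF
  ring

lemma stdGaussianPDF_tendsto : Tendsto stdGaussianPDF atTop (nhds 0) := by
  have hsq : Tendsto (fun t : ℝ => t ^ 2) atTop atTop := tendsto_pow_atTop two_ne_zero
  have h1 : Tendsto (fun t : ℝ => -(t ^ 2) / 2) atTop atBot := by
    apply Filter.Tendsto.atBot_div_const (by norm_num : (0:ℝ) < 2)
    exact tendsto_neg_atBot_iff.2 hsq
  have h2 := (Real.tendsto_exp_atBot.comp h1).const_mul (Real.sqrt (2 * Real.pi))⁻¹
  rw [mul_zero] at h2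
  exact h2

lemma integral_Ioi_mul_pdf {x : ℝ} :
    ∫ t in Set.Ioi x, t * stdGaussianPDF t = stdGaussianPDF x := by
  have hlim : Tendsto (fun t => -stdGaussianPDF t) atTop (nhds 0) := by
    simpa using stdGaussianPDF_tendsto.neg
  have h := integral_Ioi_of_hasDerivAt_of_tendsto'
    (f := fun t => -stdGaussianPDF t) (f' := fun t => t * stdGaussianPDF t) (a := x) (m := 0)
    (fun t _ => stdGaussianPDF_hasDerivAt t)
    mul_stdGaussianPDF_integrable.integrableOn hlim
  rw [h]
  ring

lemma mills {x : ℝ} (hx : 0 < x) : stdGaussianCDF (-x) ≤ stdGaussianPDF x / x := by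
  have key : stdGaussianCDF (-x) ≤ (1/x) * ∫ t in Set.Iic (-x), (-t) * stdGaussianPDF t := by
    rw [← integral_const_mul]
    simp only [stdGaussianCDF]
    apply setIntegral_mono_on stdGaussianPDF_integrable.integrableOn
    · exact ((mul_stdGaussianPDF_integrable.neg.const_mul (1/x)).integrableOn).congr_fun
        (fun t _ => by simp only [Pi.neg_apply]; ring) measurableSet_Iic
    · exact measurableSet_Iic
    · intro t ht
      simp only [Set.mem_Iic] at ht
      have hP := stdGaussianPDF_pos t
      rw [show (1/x) * (-t * stdGaussianPDF t) = (-t/x) * stdGaussianPDF t by ring]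
      have h1 : 1 ≤ -t/x := by
        rw [le_div_iff₀ hx]
        linarith
      nlinarith
  have h3 := integral_comp_neg_Iic (-x) (fun t => t * stdGaussianPDF t)
  simp_rw [stdGaussianPDF_even, neg_neg] at h3
  rw [h3, integral_Ioi_mul_pdf] at key
  rw [div_eq_inv_mul, ← one_div]
  exact key

lemma mills_lt {x : ℝ} (hx : 0 ≤ x) : stdGaussianCDF (-x) < 2 * stdGaussianPDF x := by
  rcases le_or_gt x 0.6 with h | h
  · have h1 := stdGaussianCDF_neg_le_half hx
    have h2 : Real.exp (-(0.36:ℝ)/2) ≤ Real.exp (-(x^2)/2) := by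
      apply Real.exp_le_exp.2
      nlinarith
    have h3 : (0.82:ℝ) ≤ Real.exp (-(0.36:ℝ)/2) := by
      have := Real.add_one_le_exp (-(0.36:ℝ)/2)
      linarith
    have h4 : Real.sqrt (2 * Real.pi) < 2.6 := by
      rw [show (2.6:ℝ) = Real.sqrt (2.6^2) by rw [Real.sqrt_sq]; norm_num]
      apply Real.sqrt_lt_sqrt (by positivity)
      nlinarith [Real.pi_lt_d2]
    have h2π : (0:ℝ) < Real.sqrt (2 * Real.pi) := Real.sqrt_pos.2 (by positivity)
    have h5 : (2.6:ℝ)⁻¹ < (Real.sqrt (2 * Real.pi))⁻¹ := by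
      apply inv_strictAnti₀ h2π h4
    have h6 : (0.82:ℝ) * (2.6:ℝ)⁻¹ < stdGaussianPDF x := by
      unfold stdGaussianPDF
      have hexp : (0.82:ℝ) ≤ Real.exp (-(x^2)/2) := le_trans h3 h2
      nlinarith [Real.exp_pos (-(x^2)/2)]
    nlinarith
  · have h1 := mills (lt_trans (by norm_num) h)
    have h2 : stdGaussianPDF x / x < 2 * stdGaussianPDF x := by
      rw [div_lt_iff₀ (by linarith)]
      nlinarith [stdGaussianPDF_pos x]
    linarith

/-- Let `ω` be nonnegative, nondecreasing, concave and differentiable on `[0, ∞)` with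
positive derivative, `σ > 0`, and `a*` the unique maximizer of `a·Φ(−a)` on `[0, ∞)`.
If `ε_MSE > 0` solves `ε²/(ε² + σ²) = ω'(ε)·ε/ω(ε)` and `ε*` solves
`max_{ε ∈ [0, a*σ]} ω(ε)·Φ(−ε/σ)`, then `ε* < ε_MSE`. -/
theorem epsStar_lt_epsMSE (σ astar εMSE εstar : ℝ) (hσ : 0 < σ)
    (hastar0 : 0 ≤ astar)
    (hmax : ∀ a, 0 ≤ a → a * stdGaussianCDF (-a) ≤ astar * stdGaussianCDF (-astar))
    (huniq : ∀ a, 0 ≤ a →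
      (∀ b, 0 ≤ b → b * stdGaussianCDF (-b) ≤ a * stdGaussianCDF (-a)) → a = astar)
    (ω ω' : ℝ → ℝ)
    (hnonneg : ∀ ε ∈ Set.Ici (0 : ℝ), 0 ≤ ω ε)
    (hmono : MonotoneOn ω (Set.Ici 0))
    (hconc : ConcaveOn ℝ (Set.Ici 0) ω)
    (hderiv : ∀ ε ∈ Set.Ici (0 : ℝ), HasDerivWithinAt ω (ω' ε) (Set.Ici 0) ε)
    (hpos : ∀ ε ∈ Set.Ici (0 : ℝ), 0 < ω' ε)
    (hMSEpos : 0 < εMSE)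
    (hMSEeq : εMSE ^ 2 / (εMSE ^ 2 + σ ^ 2) = ω' εMSE * εMSE / ω εMSE)
    (hstarmem : εstar ∈ Set.Icc 0 (astar * σ))
    (hstarmax : ∀ ε ∈ Set.Icc 0 (astar * σ),
      ω ε * stdGaussianCDF (-(ε / σ)) ≤ ω εstar * stdGaussianCDF (-(εstar / σ))) :
    εstar < εMSE := by
  by_contra hcon
  push_neg at hcon
  have hεstar_pos : 0 < εstar := lt_of_lt_of_le hMSEpos hcon
  have hMSE_mem : εMSE ∈ Set.Ici (0:ℝ) := le_of_lt hMSEpos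
  have hstar_mem : εstar ∈ Set.Ici (0:ℝ) := le_of_lt hεstar_pos
  have hωMSE_pos : 0 < ω εMSE := by
    rcases lt_or_eq_of_le (hnonneg εMSE hMSE_mem) with h | h
    · exact h
    · exfalso
      rw [← h, div_zero] at hMSEeq
      have : (0:ℝ) < εMSE ^ 2 / (εMSE ^ 2 + σ ^ 2) := by positivity
      linarith
  have hMSEkey : ω εMSE * εMSE = ω' εMSE * (εMSE ^ 2 + σ ^ 2) := by
    have hden : (εMSE ^ 2 + σ ^ 2) ≠ 0 := by positivity
    have hωne : ω εMSE ≠ 0 := ne_of_gt hωMSE_pos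
    field_simp at hMSEeq
    apply mul_left_cancel₀ (ne_of_gt hMSEpos)
    linear_combination εMSE * hMSEeq
  have hωMSE_ge : 2 * σ * ω' εMSE ≤ ω εMSE := by
    have hω'pos := hpos εMSE hMSE_mem
    have hsq : 2 * σ * εMSE ≤ εMSE ^ 2 + σ ^ 2 := by nlinarith [sq_nonneg (εMSE - σ)]
    have h1 : 2 * σ * ω' εMSE * εMSE ≤ ω εMSE * εMSE := by nlinarith
    have h2 := mul_le_mul_of_nonneg_right (le_refl (1:ℝ)) (le_of_lt hMSEpos)
    nlinarith
  have hω'le : ω' εstar ≤ ω' εMSE := by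
    rcases lt_or_eq_of_le hcon with h | h
    · have h1 := hconc.le_slope_of_hasDerivWithinAt hMSE_mem hstar_mem h
        (hderiv εstar hstar_mem)
      have h2 := hconc.slope_le_of_hasDerivWithinAt hMSE_mem hstar_mem h
        (hderiv εMSE hMSE_mem)
      linarith
    · rw [← h]
  have hωle : ω εMSE ≤ ω εstar := hmono hMSE_mem hstar_mem hcon
  have h2σ : 2 * σ * ω' εstar ≤ ω εstar := by
    have := mul_le_mul_of_nonneg_left hω'le (by positivity : (0:ℝ) ≤ 2 * σ)
    linarith
  set x := εstar / σ with hxdef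
  have hx_pos : 0 < x := div_pos hεstar_pos hσ
  have hCDFderiv : HasDerivAt (fun ε => stdGaussianCDF (-(ε / σ)))
      (stdGaussianPDF x * -σ⁻¹) εstar := by
    have hinner : HasDerivAt (fun ε : ℝ => -(ε / σ)) (-σ⁻¹) εstar := by
      simpa using ((hasDerivAt_id' εstar).div_const σ).fun_neg
    have houter := stdGaussianCDF_hasDerivAt (-(εstar / σ))
    have h := houter.comp εstar hinner
    rw [stdGaussianPDF_even] at h
    exact h
  have hωAt : HasDerivAt ω (ω' εstar) εstar :=
    (hderiv εstar hstar_mem).hasDerivAt (Ici_mem_nhds hεstar_pos)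
  have hg : HasDerivAt (fun ε => ω ε * stdGaussianCDF (-(ε / σ)))
      (ω' εstar * stdGaussianCDF (-(εstar / σ))
        + ω εstar * (stdGaussianPDF x * -σ⁻¹)) εstar :=
    hωAt.mul hCDFderiv
  have hDneg : ω' εstar * stdGaussianCDF (-(εstar / σ))
      + ω εstar * (stdGaussianPDF x * -σ⁻¹) < 0 := by
    have hmills := mills_lt (le_of_lt hx_pos)
    have hω'pos := hpos εstar hstar_mem
    have hP := stdGaussianPDF_pos x
    have hσinv : σ * σ⁻¹ = 1 := mul_inv_cancel₀ (ne_of_gt hσ)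
    have hcdfx : -(εstar / σ) = -x := by rw [hxdef]
    rw [hcdfx]
    have hkey : ω' εstar * stdGaussianCDF (-x) * σ < ω εstar * stdGaussianPDF x := by
      have hA := mul_lt_mul_of_pos_left hmills (mul_pos hω'pos hσ)
      have hB := mul_le_mul_of_nonneg_right h2σ hP.le
      nlinarith
    have hmul := mul_lt_mul_of_pos_right hkey (inv_pos.2 hσ)
    have heq : ω' εstar * stdGaussianCDF (-x) * (σ * σ⁻¹)
        = ω' εstar * stdGaussianCDF (-x) := by rw [hσinv, mul_one]
    nlinarith [hmul, heq]
  set g := fun ε => ω ε * stdGaussianCDF (-(ε / σ)) with hgdef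
  have hslope := hasDerivAt_iff_tendsto_slope.1 hg
  have hev0 : ∀ᶠ t in nhdsWithin εstar {εstar}ᶜ, slope g εstar t < 0 :=
    hslope.eventually_lt_const hDneg
  have hev1 : ∀ᶠ ε in nhdsWithin εstar (Set.Iio εstar), slope g εstar ε < 0 :=
    hev0.filter_mono (nhdsWithin_mono εstar
      (fun t ht => Set.mem_compl_singleton_iff.2 (ne_of_lt ht)))
  have hev2 : ∀ᶠ ε in nhdsWithin εstar (Set.Iio εstar), ε ∈ Set.Ioo 0 εstar :=
    Ioo_mem_nhdsLT_of_mem ⟨hεstar_pos, le_rfl⟩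
  obtain ⟨ε, hε1, hε2⟩ := (hev1.and hev2).exists
  have hgt : g εstar < g ε := by
    rw [slope_def_field] at hε1
    have hεne : ε - εstar < 0 := by have := hε2.2; linarith
    rcases div_neg_iff.1 hε1 with ⟨h1, h2⟩ | ⟨h1, h2⟩
    · linarith
    · linarith
  have hεIcc : ε ∈ Set.Icc 0 (astar * σ) :=
    ⟨le_of_lt hε2.1, le_trans (le_of_lt hε2.2) hstarmem.2⟩
  exact absurd (hstarmax ε hεIcc) (not_le.2 hgt)
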